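/- In the abelian group G generated by A_1,...,A_r, F with relations d_i·A_i = F (d_i positive integers), every element D has a unique representation D = Σ_{i=1}^r a_iA_i + f·F with integers f and 0 ≤ a_i < d_i for each i. -/
import Mathlib

lemma sum_gen (r : ℕ) (d : Fin r → ℕ) (c : Fin r → ℤ) :
    ∑ i, c i • ((Pi.single i (d i : ℤ) : Fin r → ℤ), (-1 : ℤ))
      = ((fun j => c j * d j : Fin r → ℤ), -∑ i, c i) := by
  refine Prod.ext ?_ ?_
  · rw [Prod.fst_sum]
    funext j
    simp [Finset.sum_apply, Pi.single_apply, Finset.sum_ite_eq', mul_comm]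
  · rw [Prod.snd_sum]
    simp [Finset.sum_neg_distrib]

/-- The abelian group with generators `A 1, ..., A r, F` and relations `d i • A i = F`,
modelled as the quotient of `(Fin r → ℤ) × ℤ` (coordinates: the `A i`'s and `F`) by the
span of the relation vectors `d i • A i - F`. -/
abbrev RelMod (r : ℕ) (d : Fin r → ℕ) : Type :=
  ((Fin r → ℤ) × ℤ) ⧸ Submodule.span ℤ
    (Set.range fun i : Fin r => ((Pi.single i (d i : ℤ) : Fin r → ℤ), (-1 : ℤ)))

/-- In the abelian group generated by `A 1, ..., A r, F` with relations
`d i • A i = F` (`d i` positive), every element `D` has a unique representation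
`D = ∑ a i • A i + f • F` with `f ∈ ℤ` and `0 ≤ a i < d i` for each `i`. -/
theorem unique_normal_form (r : ℕ) (d : Fin r → ℕ) (hd : ∀ i, 0 < d i)
    (D : RelMod r d) :
    ∃! v : (Fin r → ℤ) × ℤ,
      (∀ i, 0 ≤ v.1 i ∧ v.1 i < (d i : ℤ))
      ∧ (Submodule.Quotient.mk v : RelMod r d) = D := by
  obtain ⟨v, rfl⟩ := Submodule.Quotient.mk_surjective _ D
  have hd' : ∀ i, (0 : ℤ) < d i := fun i => by exact_mod_cast hd i
  set S := Submodule.span ℤ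
    (Set.range fun i : Fin r => ((Pi.single i (d i : ℤ) : Fin r → ℤ), (-1 : ℤ))) with hS
  set n : (Fin r → ℤ) × ℤ := (fun i => v.1 i % d i, v.2 + ∑ i, v.1 i / (d i : ℤ)) with hn
  have hn1 : ∀ i, 0 ≤ n.1 i ∧ n.1 i < (d i : ℤ) := fun i =>
    ⟨Int.emod_nonneg _ (hd' i).ne', Int.emod_lt_of_pos _ (hd' i)⟩
  have hnv : n - v ∈ S := by
    have key : n - v
        = ∑ i, (-(v.1 i / (d i : ℤ))) • ((Pi.single i (d i : ℤ) : Fin r → ℤ), (-1 : ℤ)) := by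
      rw [sum_gen]
      refine Prod.ext ?_ ?_
      · funext j
        simp only [Prod.fst_sub, hn]
        show v.1 j % d j - v.1 j = -(v.1 j / (d j : ℤ)) * d j
        have := Int.emod_add_mul_ediv (v.1 j) (d j)
        ring_nf
        linarith [Int.emod_add_mul_ediv (v.1 j) (d j)]
      · simp only [Prod.snd_sub, hn]
        simp
    rw [key]
    exact Submodule.sum_mem _ fun i _ => Submodule.smul_mem _ _
      (Submodule.subset_span ⟨i, rfl⟩)
  have hmkn : (Submodule.Quotient.mk n : RelMod r d) = Submodule.Quotient.mk v := by
    rw [Submodule.Quotient.eq]; exact hnv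
  refine ⟨n, ⟨hn1, hmkn⟩, ?_⟩
  rintro w ⟨hw, hwD⟩
  have hwv : w - v ∈ S := by rwa [← Submodule.Quotient.eq]
  have hwn : w - n ∈ S := by
    have := Submodule.sub_mem _ hwv hnv
    simpa using this
  rw [hS, Submodule.mem_span_range_iff_exists_fun ℤ] at hwn
  obtain ⟨c, hc⟩ := hwn
  rw [sum_gen] at hc
  have h1 : ∀ j, w.1 j - n.1 j = c j * d j := fun j =>
    (congrFun (congrArg Prod.fst hc) j).symm
  have h2 : w.2 - n.2 = -∑ i, c i := (congrArg Prod.snd hc).symm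
  have hc0 : ∀ j, c j = 0 := by
    intro j
    have hb1 := hw j
    have hb2 := hn1 j
    have hlt1 : -(d j : ℤ) < c j * d j := by nlinarith [h1 j]
    have hlt2 : c j * d j < d j := by nlinarith [h1 j]
    by_contra hne
    rcases lt_or_gt_of_ne hne with hneg | hpos
    · have h1' : c j ≤ -1 := by omega
      have := mul_le_mul_of_nonneg_right h1' (hd' j).le
      linarith
    · have h1' : (1 : ℤ) ≤ c j := hpos
      have := mul_le_mul_of_nonneg_right h1' (hd' j).le
      linarith
  have hfst : w.1 = n.1 := by
    funext j
    have := h1 j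
    rw [hc0 j] at this
    linarith
  have hsnd : w.2 = n.2 := by
    have hz : ∑ i, c i = 0 := Finset.sum_eq_zero fun i _ => hc0 i
    rw [hz] at h2
    linarith
  exact Prod.ext hfst hsnd
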